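/- For n ≥ 3, the n×n circulant matrix Q = circ(Q₁, Q₂, ..., Qₙ) built from Pell-Lucas numbers is invertible (has nonzero determinant over the rationals). -/

import Mathlib

def pell : ℕ → ℚ
  | 0 => 0
  | 1 => 1
  | n + 2 => 2 * pell (n + 1) + pell n

def pellLucas : ℕ → ℚ
  | 0 => 2
  | 1 => 2
  | n + 2 => 2 * pellLucas (n + 1) + pellLucas n

/-- Circulant matrix `circ (c₁, …, cₙ)` with `(i,j)` entry `c ((j - i mod n) + 1)`. -/
def circMat (n : ℕ) (c : ℕ → ℚ) : Matrix (Fin n) (Fin n) ℚ :=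
  fun i j => c ((j - i : Fin n).val + 1)

open Polynomial Finset
open Fin.NatCast


lemma pellLucas_pos : ∀ n, 0 < pellLucas n
  | 0 => by norm_num [pellLucas]
  | 1 => by norm_num [pellLucas]
  | n + 2 => by
      have h1 := pellLucas_pos (n+1)
      have h2 := pellLucas_pos n
      rw [pellLucas]; linarith

lemma pellLucas_ge_two : ∀ n, 2 ≤ pellLucas n
  | 0 => by norm_num [pellLucas]
  | 1 => by norm_num [pellLucas]
  | n + 2 => by
      have h1 := pellLucas_ge_two (n+1)
      have h2 := pellLucas_pos n
      rw [pellLucas]; linarith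

lemma pellLucas_lt (n : ℕ) (h : 1 ≤ n) : pellLucas n < pellLucas (n+1) := by
  obtain ⟨m, rfl⟩ := Nat.exists_eq_add_of_le' h
  have h1 := pellLucas_pos (m + 1)
  have h2 := pellLucas_ge_two m
  show pellLucas (m + 1) < pellLucas (m + 2)
  rw [show pellLucas (m+2) = 2 * pellLucas (m + 1) + pellLucas m from rfl]
  linarith

-- complex sum identity
lemma sum_ident (z : ℂ) : ∀ (n : ℕ), 1 ≤ n →
    (1 - 2*z - z^2) * (∑ k ∈ range n, (pellLucas (k+1) : ℂ) * z^k)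
      = 2 + 2*z - (pellLucas (n+1) : ℂ) * z^n - (pellLucas n : ℂ) * z^(n+1)
  | 1, _ => by
      simp only [range_one, sum_singleton, pow_zero, mul_one]
      have h1 : pellLucas 1 = 2 := rfl
      have h2 : pellLucas 2 = 6 := by norm_num [pellLucas]
      rw [h1, h2]; norm_num; ring
  | n + 2, _ => by
      have ih := sum_ident z (n + 1) (Nat.le_add_left 1 n)
      rw [sum_range_succ, mul_add, ih]
      have hrec : (pellLucas (n + 3) : ℂ) = 2 * pellLucas (n + 2) + pellLucas (n + 1) := by
        have : pellLucas (n + 3) = 2 * pellLucas (n + 2) + pellLucas (n + 1) := rfl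
        rw [this]; push_cast; ring
      rw [hrec]; ring

noncomputable def gpoly (n : ℕ) : Polynomial ℚ := ∑ k ∈ range n, C (pellLucas (k+1)) * X^k

lemma aeval_gpoly (z : ℂ) (n : ℕ) :
    aeval z (gpoly n) = ∑ k ∈ range n, (pellLucas (k+1) : ℂ) * z^k := by
  simp [gpoly, map_sum]

lemma gpoly_coprime (n : ℕ) (hn : 3 ≤ n) : IsCoprime (gpoly n) (X^n - 1 : Polynomial ℚ) := by
  rw [Polynomial.isCoprime_iff_aeval_ne_zero_of_isAlgClosed ℚ ℂ]
  intro z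
  by_contra hc
  push_neg at hc
  obtain ⟨h1, h2⟩ := hc
  rw [map_sub, map_pow, aeval_X, map_one, sub_eq_zero] at h2
  rw [aeval_gpoly] at h1
  have hid := sum_ident z n (by omega)
  rw [h1, mul_zero, h2] at hid
  have hz1 : z^(n+1) = z := by rw [pow_succ, h2, one_mul]
  rw [hz1] at hid
  -- hid : 0 = 2 + 2z - Q(n+1) - Q n * z
  have habs : ‖z‖ = 1 := by
    have hp : ‖z‖ ^ n = 1 := by rw [← norm_pow, h2, norm_one]
    have h1n : (1:ℝ) ^ n = 1 := one_pow n
    exact (pow_left_strictMonoOn₀ (n := n) (by omega)).injOn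
      (Set.mem_setOf.2 (norm_nonneg z)) (Set.mem_setOf.2 zero_le_one) (by rw [hp, h1n])
  have hz : ((pellLucas n : ℂ) - 2) * z = 2 - (pellLucas (n+1) : ℂ) := by
    linear_combination hid
  have habs2 := congrArg (‖·‖) hz
  rw [norm_mul, habs, mul_one] at habs2
  have hc1 : ‖((pellLucas n : ℂ) - 2)‖ = ((pellLucas n : ℝ)) - 2 := by
    rw [show ((pellLucas n : ℂ) - 2) = (((pellLucas n : ℝ) - 2 : ℝ) : ℂ) by push_cast; ring,
      Complex.norm_real, Real.norm_eq_abs, abs_of_nonneg]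
    have := pellLucas_ge_two n
    have : (2:ℝ) ≤ (pellLucas n : ℝ) := by exact_mod_cast this
    linarith
  have hc2 : ‖(2 - (pellLucas (n+1) : ℂ))‖ = ((pellLucas (n+1) : ℝ)) - 2 := by
    rw [show (2 - (pellLucas (n+1) : ℂ)) = (((2 : ℝ) - (pellLucas (n+1) : ℝ) : ℝ) : ℂ) by push_cast; ring,
      Complex.norm_real, Real.norm_eq_abs, abs_of_nonpos, neg_sub]
    have := pellLucas_ge_two (n+1)
    have : (2:ℝ) ≤ (pellLucas (n+1) : ℝ) := by exact_mod_cast this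
    linarith
  rw [hc1, hc2] at habs2
  have hlt := pellLucas_lt n (by omega)
  have hlt' : (pellLucas n : ℝ) < (pellLucas (n+1) : ℝ) := by exact_mod_cast hlt
  linarith

def Pmat (n : ℕ) [NeZero n] : Matrix (Fin n) (Fin n) ℚ := fun i j => if j = i + 1 then 1 else 0

lemma Pmat_pow (n : ℕ) [NeZero n] (k : ℕ) (i j : Fin n) :
    (Pmat n ^ k) i j = if j = i + (k : Fin n) then 1 else 0 := by
  induction k generalizing j with
  | zero => simp [Matrix.one_apply, eq_comm]
  | succ k ih =>
      rw [pow_succ, Matrix.mul_apply]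
      simp only [Pmat, ih]
      rw [Finset.sum_eq_single (i + (k : Fin n))]
      · simp [add_assoc]
      · intro m _ hm
        rw [if_neg hm, zero_mul]
      · simp

lemma Pmat_pow_n (n : ℕ) [NeZero n] : (Pmat n) ^ n = 1 := by
  ext i j
  rw [Pmat_pow, Fin.natCast_self, add_zero, Matrix.one_apply]
  simp [eq_comm]

lemma aeval_Pmat (n : ℕ) [NeZero n] : aeval (Pmat n) (gpoly n) = circMat n pellLucas := by
  rw [gpoly, map_sum]
  ext i j
  rw [Matrix.sum_apply]
  have hterm : ∀ k, (aeval (Pmat n) (C (pellLucas (k+1)) * X ^ k)) i j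
      = pellLucas (k+1) * ((Pmat n ^ k) i j) := by
    intro k
    rw [map_mul, aeval_C, map_pow, aeval_X, Matrix.mul_apply]
    rw [Finset.sum_eq_single i]
    · simp [Matrix.algebraMap_matrix_apply]
    · intro m _ hm
      rw [Matrix.algebraMap_matrix_apply, if_neg (fun h => hm h.symm), zero_mul]
    · simp
  simp only [hterm, Pmat_pow]
  rw [Finset.sum_eq_single ((j - i : Fin n)).val]
  · rw [if_pos, mul_one]; rfl
    rw [Fin.cast_val_eq_self]
    simp
  · intro k hk hk'
    rw [if_neg, mul_zero]
    intro h
    apply hk'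
    have : (k : Fin n) = j - i := by rw [h]; exact (add_sub_cancel_left _ _).symm
    rw [← this, Fin.val_cast_of_lt (Finset.mem_range.mp hk)]
  · intro h
    exact absurd (Finset.mem_range.mpr ((j - i : Fin n)).isLt) h

theorem circ_pellLucas_invertible (n : ℕ) (hn : 3 ≤ n) : (circMat n pellLucas).det ≠ 0 := by
  haveI : NeZero n := ⟨by omega⟩
  obtain ⟨a, b, hab⟩ := gpoly_coprime n hn
  have h := congrArg (aeval (Pmat n)) hab
  rw [map_add, map_mul, map_mul, map_one, aeval_Pmat] at h
  have hX : aeval (Pmat n) (X ^ n - 1 : Polynomial ℚ) = 0 := by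
    rw [map_sub, map_pow, aeval_X, map_one, Pmat_pow_n, sub_self]
  rw [hX, mul_zero, add_zero] at h
  have hd := congrArg Matrix.det h
  rw [Matrix.det_mul, Matrix.det_one] at hd
  intro h0
  rw [h0, mul_zero] at hd
  exact zero_ne_one hd
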